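/- arXiv:1110.6358 — 2 statements merged into one kernel-verified Lean document; each statement's English description precedes it below -/
import Mathlib

section
/- Under conditions t_{k+q} - t_k = T₂ and l_{k+q} = l_k for all k ∈ ℤ, and T = sT₂, the function Δ(t₀) = Σ_{k=j}^{msq+j} DH(q(t_k - t₀, r)) · l_k(q(t_k - t₀, r), 0), defined for t₀ ∈ (t_{j-1}, t_j] with the index j depending on t₀, satisfies Δ(t₀ + T) = Δ(t₀) for all t₀ ∈ ℝ; that is, Δ is T-periodic. -/
/-- Dot product on ℝ². -/
def dot2 (a b : ℝ × ℝ) : ℝ := a.1 * b.1 + a.2 * b.2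

lemma aux_t (t : ℤ → ℝ) (q : ℕ) (T₂ : ℝ)
    (htq : ∀ k : ℤ, t (k + (q : ℤ)) = t k + T₂) :
    ∀ (n : ℕ) (k : ℤ), t (k + n * (q : ℤ)) = t k + n * T₂ := by
  intro n
  induction n with
  | zero => simp
  | succ n ih =>
    intro k
    have : k + (n + 1 : ℕ) * (q : ℤ) = (k + n * (q : ℤ)) + (q : ℤ) := by push_cast; ring
    rw [this, htq, ih]; push_cast; ring

lemma aux_l (l : ℤ → ℝ × ℝ → ℝ → ℝ × ℝ) (q : ℕ)
    (hlq : ∀ k : ℤ, l (k + (q : ℤ)) = l k) :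
    ∀ (n : ℕ) (k : ℤ), l (k + n * (q : ℤ)) = l k := by
  intro n
  induction n with
  | zero => simp
  | succ n ih =>
    intro k
    have : k + (n + 1 : ℕ) * (q : ℤ) = (k + n * (q : ℤ)) + (q : ℤ) := by push_cast; ring
    rw [this, hlq, ih]

/-- the function
`Δ(t₀) = Σ_{k=j}^{msq+j} DH(q(t_k - t₀, r)) · l_k(q(t_k - t₀, r), 0)`
is `T`-periodic: shifting `t₀` by `T = sT₂` and the index window by `sq`
gives the same value. -/
theorem stmt5 (t : ℤ → ℝ) (q s m : ℕ) (hq : 1 ≤ q) (hs : 1 ≤ s) (hm : 1 ≤ m)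
    (T₂ T : ℝ) (hT₂ : 0 < T₂) (hT : T = s * T₂)
    (l : ℤ → ℝ × ℝ → ℝ → ℝ × ℝ)
    (qq : ℝ → ℝ × ℝ) (DH : ℝ × ℝ → ℝ × ℝ)
    (htq : ∀ k : ℤ, t (k + (q : ℤ)) = t k + T₂)
    (hlq : ∀ k : ℤ, l (k + (q : ℤ)) = l k) :
    ∀ (j : ℤ) (t₀ : ℝ),
      (∑ k ∈ Finset.Icc (j + (s * q : ℕ)) ((m * s * q : ℕ) + j + (s * q : ℕ)),
        dot2 (DH (qq (t k - (t₀ + T)))) (l k (qq (t k - (t₀ + T))) 0)) =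
      ∑ k ∈ Finset.Icc j ((m * s * q : ℕ) + j),
        dot2 (DH (qq (t k - t₀))) (l k (qq (t k - t₀)) 0) := by
  intro j t₀
  rw [show (Finset.Icc (j + (s * q : ℕ)) ((m * s * q : ℕ) + j + (s * q : ℕ)))
      = Finset.map (addRightEmbedding ((s * q : ℕ) : ℤ)) (Finset.Icc j ((m * s * q : ℕ) + j)) by
    rw [Finset.map_add_right_Icc]]
  rw [Finset.sum_map]
  apply Finset.sum_congr rfl
  intro k _
  have ht' : t (k + ((s * q : ℕ) : ℤ)) = t k + s * T₂ := by
    have := aux_t t q T₂ htq s k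
    rw [show (((s * q : ℕ) : ℤ)) = (s : ℤ) * (q : ℤ) by push_cast; ring]
    exact this
  have hl' : l (k + ((s * q : ℕ) : ℤ)) = l k := by
    have := aux_l l q hlq s k
    rw [show (((s * q : ℕ) : ℤ)) = (s : ℤ) * (q : ℤ) by push_cast; ring]
    exact this
  simp only [addRightEmbedding_apply, ht', hl', hT]
  ring_nf
end

section
/- The system M(t₀,h₀) = 0, N(t₀,h₀) = 0 with M(t₀,r) = 2πr[1 + 2√(2r)(cos³t₀ + sin³t₀)] and N(t₀,r) = π√(r/2) sin(2t₀)(sin t₀ - cos t₀), restricted to t₀ ∈ [0,2π], h₀ > 0, has exactly three solutions: (5π/4, 1/4), (π, 1/8), and (3π/2, 1/8). -/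
open Real

lemma cos54 : Real.cos (5 * Real.pi / 4) = -(Real.sqrt 2 / 2) := by
  have h : 5 * Real.pi / 4 = Real.pi / 4 + Real.pi := by ring
  rw [h, Real.cos_add_pi, Real.cos_pi_div_four]

lemma sin54 : Real.sin (5 * Real.pi / 4) = -(Real.sqrt 2 / 2) := by
  have h : 5 * Real.pi / 4 = Real.pi / 4 + Real.pi := by ring
  rw [h, Real.sin_add_pi, Real.sin_pi_div_four]

lemma cos32 : Real.cos (3 * Real.pi / 2) = 0 := by
  have h : 3 * Real.pi / 2 = Real.pi / 2 + Real.pi := by ring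
  rw [h, Real.cos_add_pi, Real.cos_pi_div_two, neg_zero]

lemma sin32 : Real.sin (3 * Real.pi / 2) = -1 := by
  have h : 3 * Real.pi / 2 = Real.pi / 2 + Real.pi := by ring
  rw [h, Real.sin_add_pi, Real.sin_pi_div_two]

lemma sqrt14 : Real.sqrt (2 * (1/8 : ℝ)) = 1/2 := by
  rw [show (2 * (1/8 : ℝ)) = (1/2)^2 by norm_num, Real.sqrt_sq (by norm_num)]

lemma sqrthalf : Real.sqrt (2 * (1/4 : ℝ)) * Real.sqrt 2 = 1 := by
  rw [← Real.sqrt_mul (by norm_num)]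
  norm_num

set_option maxHeartbeats 1000000 in
/-- the system `M(t₀,h₀) = N(t₀,h₀) = 0`, with
`M(t₀,r) = 2πr[1 + 2√(2r)(cos³t₀ + sin³t₀)]` and
`N(t₀,r) = π√(r/2) sin(2t₀)(sin t₀ - cos t₀)`, restricted to
`t₀ ∈ [0,2π]`, `h₀ > 0`, has exactly the three solutions
`(5π/4, 1/4)`, `(π, 1/8)`, `(3π/2, 1/8)`. -/
theorem stmt13 (M N : ℝ → ℝ → ℝ)
    (hM : ∀ t₀ r : ℝ, M t₀ r =
      2 * Real.pi * r *
        (1 + 2 * Real.sqrt (2 * r) * (Real.cos t₀ ^ 3 + Real.sin t₀ ^ 3)))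
    (hN : ∀ t₀ r : ℝ, N t₀ r =
      Real.pi * Real.sqrt (r / 2) * Real.sin (2 * t₀) *
        (Real.sin t₀ - Real.cos t₀)) :
    {p : ℝ × ℝ | p.1 ∈ Set.Icc 0 (2 * Real.pi) ∧ 0 < p.2 ∧
        M p.1 p.2 = 0 ∧ N p.1 p.2 = 0} =
      {(5 * Real.pi / 4, 1 / 4), (Real.pi, 1 / 8),
        (3 * Real.pi / 2, 1 / 8)} := by
  have pi_pos := Real.pi_pos
  have a2 : Real.sqrt 2 ^ 2 = 2 := Real.sq_sqrt (by norm_num)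
  have a0 : (0:ℝ) ≤ Real.sqrt 2 := Real.sqrt_nonneg 2
  ext ⟨t, r⟩
  simp only [Set.mem_setOf_eq, Set.mem_insert_iff, Set.mem_singleton_iff,
    Prod.mk.injEq, Set.mem_Icc, hM, hN]
  constructor
  · rintro ⟨⟨ht0, ht2⟩, hr, hMe, hNe⟩
    have hsn : 0 ≤ Real.sqrt (2 * r) := Real.sqrt_nonneg _
    have hsr2 : Real.sqrt (2 * r) ^ 2 = 2 * r := Real.sq_sqrt (by linarith)
    have h1 : Real.pi * Real.sqrt (r / 2) ≠ 0 := by positivity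
    have h2 : 2 * Real.pi * r ≠ 0 := by positivity
    have hM1 : 1 + 2 * Real.sqrt (2 * r) * (Real.cos t ^ 3 + Real.sin t ^ 3) = 0 := by
      rcases mul_eq_zero.1 hMe with h | h
      · exact absurd h h2
      · exact h
    have hN1 : Real.sin t = 0 ∨ Real.cos t = 0 ∨ Real.sin t = Real.cos t := by
      rcases mul_eq_zero.1 hNe with h | h
      · rcases mul_eq_zero.1 h with h' | h'
        · exact absurd h' h1
        · rw [Real.sin_two_mul] at h'
          rcases mul_eq_zero.1 h' with h'' | h''
          · rcases mul_eq_zero.1 h'' with h3 | h3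
            · norm_num at h3
            · exact Or.inl h3
          · exact Or.inr (Or.inl h'')
      · exact Or.inr (Or.inr (by linarith))
    rcases hN1 with hs | hc | hsc
    · -- sin t = 0
      obtain ⟨n, hn⟩ := Real.sin_eq_zero_iff.1 hs
      have hn0 : (0:ℤ) ≤ n := by
        by_contra h
        push_neg at h
        have hn' : n ≤ -1 := by omega
        have : (n:ℝ) ≤ -1 := by exact_mod_cast hn'
        nlinarith
      have hn2 : n ≤ 2 := by
        by_contra h
        push_neg at h
        have : (3:ℝ) ≤ (n:ℝ) := by exact_mod_cast h
        nlinarith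
      interval_cases n
      · -- t = 0
        have ht : t = 0 := by push_cast at hn; linarith
        rw [ht, Real.cos_zero, Real.sin_zero] at hM1
        nlinarith [hsn]
      · -- t = π
        have ht : t = Real.pi := by push_cast at hn; linarith
        rw [ht, Real.cos_pi, Real.sin_pi] at hM1
        have hs12 : Real.sqrt (2 * r) = 1/2 := by nlinarith
        rw [hs12] at hsr2
        right; left
        exact ⟨ht, by nlinarith⟩
      · -- t = 2π
        have ht : t = 2 * Real.pi := by push_cast at hn; linarith
        rw [ht, Real.cos_two_pi, Real.sin_two_pi] at hM1
        nlinarith [hsn]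
    · -- cos t = 0
      obtain ⟨k, hk⟩ := Real.cos_eq_zero_iff.1 hc
      have hk0 : (0:ℤ) ≤ k := by
        by_contra h
        push_neg at h
        have hk' : k ≤ -1 := by omega
        have : (k:ℝ) ≤ -1 := by exact_mod_cast hk'
        nlinarith
      have hk1 : k ≤ 1 := by
        by_contra h
        push_neg at h
        have : (2:ℝ) ≤ (k:ℝ) := by exact_mod_cast h
        nlinarith
      interval_cases k
      · -- t = π/2
        have ht : t = Real.pi / 2 := by push_cast at hk; linarith
        rw [ht, Real.cos_pi_div_two, Real.sin_pi_div_two] at hM1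
        nlinarith [hsn]
      · -- t = 3π/2
        have ht : t = 3 * Real.pi / 2 := by push_cast at hk; linarith
        rw [ht, cos32, sin32] at hM1
        have hs12 : Real.sqrt (2 * r) = 1/2 := by nlinarith
        rw [hs12] at hsr2
        right; right
        exact ⟨ht, by nlinarith⟩
    · -- sin t = cos t
      have hst : Real.sin (t - Real.pi / 4) = 0 := by
        rw [Real.sin_sub, Real.cos_pi_div_four, Real.sin_pi_div_four, hsc]
        ring
      obtain ⟨n, hn⟩ := Real.sin_eq_zero_iff.1 hst
      have hn0 : (0:ℤ) ≤ n := by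
        by_contra h
        push_neg at h
        have hn' : n ≤ -1 := by omega
        have : (n:ℝ) ≤ -1 := by exact_mod_cast hn'
        nlinarith
      have hn1 : n ≤ 1 := by
        by_contra h
        push_neg at h
        have : (2:ℝ) ≤ (n:ℝ) := by exact_mod_cast h
        nlinarith
      interval_cases n
      · -- t = π/4
        have ht : t = Real.pi / 4 := by push_cast at hn; linarith
        rw [ht, Real.cos_pi_div_four, Real.sin_pi_div_four] at hM1
        nlinarith [mul_nonneg hsn (pow_nonneg a0 3)]
      · -- t = 5π/4
        have ht : t = 5 * Real.pi / 4 := by push_cast at hn; linarith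
        rw [ht, cos54, sin54] at hM1
        have h5 : Real.sqrt (2 * r) * Real.sqrt 2 = 1 := by
          linear_combination (-1 : ℝ) * hM1 -
            (Real.sqrt (2 * r) * Real.sqrt 2 / 2) * a2
        have h7 : Real.sqrt (2 * r) ^ 2 * Real.sqrt 2 ^ 2 = 1 := by
          rw [← mul_pow, h5]; norm_num
        rw [hsr2, a2] at h7
        left
        exact ⟨ht, by linarith⟩
  · rintro (⟨rfl, rfl⟩ | ⟨rfl, rfl⟩ | ⟨rfl, rfl⟩)
    · refine ⟨⟨by linarith, by linarith⟩, by norm_num, ?_, ?_⟩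
      · rw [cos54, sin54]
        have key : 1 + 2 * Real.sqrt (2 * (1/4 : ℝ)) *
            ((-(Real.sqrt 2 / 2)) ^ 3 + (-(Real.sqrt 2 / 2)) ^ 3) = 0 := by
          linear_combination (-1 : ℝ) * sqrthalf -
            (Real.sqrt (2 * (1/4 : ℝ)) * Real.sqrt 2 / 2) * a2
        rw [key]
        ring
      · rw [cos54, sin54]; ring
    · refine ⟨⟨by linarith, by linarith⟩, by norm_num, ?_, ?_⟩
      · rw [Real.cos_pi, Real.sin_pi, sqrt14]; norm_num
      · rw [Real.sin_two_pi]; ring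
    · refine ⟨⟨by linarith, by linarith⟩, by norm_num, ?_, ?_⟩
      · rw [cos32, sin32, sqrt14]; norm_num
      · rw [show 2 * (3 * Real.pi / 2) = Real.pi + 2 * Real.pi by ring,
          Real.sin_add_two_pi, Real.sin_pi]
        ring
end
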